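/- There exists a lexicographically optimal (LexOpt) schedule of n jobs with processing times p_1,…,p_n > 0 on m identical machines whose machine completion times C_1,…,C_m satisfy: (1) C_i ≥ C_{i+1} for every i ∈ {1,…,m−1}, and (2) for every i ∈ {1,…,m}, both Σ_{q=1}^{i−1} C_q + (m−i+1)·C_i ≥ Σ_{j=1}^n p_j and i·C_i + Σ_{q=i+1}^m C_q ≤ Σ_{j=1}^n p_j. -/

import Mathlib

open Finset

/-- Completion time (load) of machine `i` under schedule `σ` and processing times `p`. -/
noncomputable def mLoad {n m : ℕ} (p : Fin n → ℝ) (σ : Fin n → Fin m) (i : Fin m) : ℝ :=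
  ∑ j ∈ Finset.univ.filter (fun j => σ j = i), p j

/-- Makespan of schedule `σ`: the maximum machine completion time. -/
noncomputable def makespan {n m : ℕ} (p : Fin n → ℝ) (σ : Fin n → Fin m) : ℝ :=
  ⨆ i, mLoad p σ i

/-- Minimum makespan of the jobs with processing times `p` on `m` machines. -/
noncomputable def optMakespan {n : ℕ} (m : ℕ) (p : Fin n → ℝ) : ℝ :=
  ⨅ σ : Fin n → Fin m, makespan p σ

/-- The completion-time vector sorted in non-increasing order. -/
noncomputable def sortedDesc {m : ℕ} (C : Fin m → ℝ) : Fin m → ℝ :=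
  fun i => C (Tuple.sort C i.rev)

/-- A schedule is LexOpt if its non-increasingly sorted completion-time vector is
lexicographically at most that of every other schedule. -/
def IsLexOpt {n m : ℕ} (p : Fin n → ℝ) (σ : Fin n → Fin m) : Prop :=
  ∀ σ' : Fin n → Fin m, toLex (sortedDesc (mLoad p σ)) ≤ toLex (sortedDesc (mLoad p σ'))

/-- There exists a LexOpt schedule whose machine completion times are
non-increasing in the machine index and satisfy the stated lower/upper bound inequalities. -/
theorem stmt0 (n m : ℕ) (hm : 0 < m) (p : Fin n → ℝ) (hp : ∀ j, 0 < p j) :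
    ∃ σ : Fin n → Fin m, IsLexOpt p σ ∧ Antitone (mLoad p σ) ∧
      (∀ i : Fin m,
        (∑ q ∈ Finset.univ.filter (fun q => q < i), mLoad p σ q)
            + ((m : ℝ) - (i : ℕ)) * mLoad p σ i ≥ ∑ j, p j ∧
        ((i : ℕ) + 1 : ℝ) * mLoad p σ i
            + ∑ q ∈ Finset.univ.filter (fun q => i < q), mLoad p σ q ≤ ∑ j, p j) := by
  have hwf : WellFoundedLT (Fin m) := inferInstance
  letI L : LinearOrder (Lex (Fin m → ℝ)) :=
    @Pi.Lex.linearOrder (Fin m) (fun _ => ℝ) inferInstance hwf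
      (fun _ => inferInstance)
  haveI : Nonempty (Fin n → Fin m) := ⟨fun _ => ⟨0, hm⟩⟩
  obtain ⟨σ₀, hσ₀⟩ := Finite.exists_min (fun σ : Fin n → Fin m => toLex (sortedDesc (mLoad p σ)))
  set C₀ : Fin m → ℝ := mLoad p σ₀ with hC₀
  set τ : Equiv.Perm (Fin m) := Fin.revPerm.trans (Tuple.sort C₀) with hτ
  set σ : Fin n → Fin m := fun j => τ.symm (σ₀ j) with hσ
  have hload : ∀ i, mLoad p σ i = C₀ (τ i) := by
    intro i
    unfold mLoad
    congr 1
    ext j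
    simp [hσ, Equiv.symm_apply_eq]
  have hτi : ∀ i : Fin m, τ i = Tuple.sort C₀ i.rev := fun i => rfl
  have hanti : Antitone (mLoad p σ) := by
    intro a b hab
    rw [hload, hload, hτi, hτi]
    exact Tuple.monotone_sort C₀ (Fin.rev_le_rev.mpr hab)
  have hsd : sortedDesc (mLoad p σ) = sortedDesc C₀ := by
    funext i
    have key : (C₀ ∘ τ) ∘ (Tuple.sort (C₀ ∘ τ)) = C₀ ∘ Tuple.sort C₀ :=
      Tuple.comp_perm_comp_sort_eq_comp_sort
    have h1 : mLoad p σ = C₀ ∘ τ := funext hload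
    show (mLoad p σ) (Tuple.sort (mLoad p σ) i.rev) = sortedDesc C₀ i
    rw [h1]
    calc (C₀ ∘ τ) (Tuple.sort (C₀ ∘ τ) i.rev) = ((C₀ ∘ τ) ∘ Tuple.sort (C₀ ∘ τ)) i.rev := rfl
      _ = (C₀ ∘ Tuple.sort C₀) i.rev := by rw [key]
      _ = sortedDesc C₀ i := rfl
  have htot : ∑ i, mLoad p σ i = ∑ j, p j := Finset.sum_fiberwise univ σ p
  refine ⟨σ, ?_, hanti, ?_⟩
  · intro σ'
    rw [hsd]
    exact hσ₀ σ'
  · intro i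
    have hcard1 : (Finset.univ.filter (fun q => ¬ q < i)).card = m - i := by
      have h : Finset.univ.filter (fun q : Fin m => ¬ q < i) = Finset.Ici i := by
        ext q; simp
      rw [h, Fin.card_Ici]
    have hcard2 : (Finset.univ.filter (fun q => ¬ i < q)).card = i + 1 := by
      have h : Finset.univ.filter (fun q : Fin m => ¬ i < q) = Finset.Iic i := by
        ext q; simp
      rw [h, Fin.card_Iic]
    constructor
    · have hsplit := Finset.sum_filter_add_sum_filter_not Finset.univ
        (fun q : Fin m => q < i) (mLoad p σ)
      have hle : ∑ q ∈ Finset.univ.filter (fun q => ¬ q < i), mLoad p σ q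
          ≤ ((m : ℝ) - (i : ℕ)) * mLoad p σ i := by
        have h2 := Finset.sum_le_card_nsmul (Finset.univ.filter (fun q : Fin m => ¬ q < i))
          (mLoad p σ) (mLoad p σ i) (fun q hq => hanti (not_lt.mp (by simpa using hq)))
        rw [hcard1, nsmul_eq_mul] at h2
        have hmi : ((m - (i : ℕ) : ℕ) : ℝ) = (m : ℝ) - (i : ℕ) :=
          Nat.cast_sub i.isLt.le
        rw [hmi] at h2
        exact h2
      rw [ge_iff_le, ← htot, ← hsplit]
      linarith
    · have hsplit := Finset.sum_filter_add_sum_filter_not Finset.univ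
        (fun q : Fin m => i < q) (mLoad p σ)
      have hle : ((i : ℕ) + 1 : ℝ) * mLoad p σ i
          ≤ ∑ q ∈ Finset.univ.filter (fun q => ¬ i < q), mLoad p σ q := by
        have h2 := Finset.card_nsmul_le_sum (Finset.univ.filter (fun q : Fin m => ¬ i < q))
          (mLoad p σ) (mLoad p σ i) (fun q hq => hanti (not_lt.mp (by simpa using hq)))
        rw [hcard2, nsmul_eq_mul] at h2
        push_cast at h2
        linarith
      rw [← htot, ← hsplit]
      linarith
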